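/- arXiv:2601.17068 — 4 statements merged into one kernel-verified Lean document; each statement's English description precedes it below -/
import Mathlib

section
/- Let k be a real number and g : ℝ → ℂ a differentiable function. Define H(x) := e^{x}·g(−x). Then for every x ≠ 0 one has the exact identity (T^k H)(x) = e^{x}·( g(−x) − (T^k g)(−x) ), where both sides are evaluated using the Cherednik operator. -/
open Complex

/-- The Cherednik operator `T^k` of rank one, acting on functions `g : ℝ → ℂ`. -/
noncomputable def cherednik (k : ℝ) (g : ℝ → ℂ) (x : ℝ) : ℂ :=
  deriv g x + 2 * (k : ℂ) * (g x - g (-x)) / (1 - Complex.exp (-2 * (x : ℂ)))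
    - (k : ℂ) * g x

theorem cherednik_tilted_reflection (k : ℝ) (g : ℝ → ℂ) (hg : Differentiable ℝ g)
    (H : ℝ → ℂ) (hH : ∀ x : ℝ, H x = Complex.exp (x : ℂ) * g (-x)) :
    ∀ x : ℝ, x ≠ 0 →
      cherednik k H x = Complex.exp (x : ℂ) * (g (-x) - cherednik k g (-x)) := by
  have hHf : H = fun x : ℝ => Complex.exp (x : ℂ) * g (-x) := funext hH
  subst hHf
  intro x hx
  -- derivative of H
  have hexp : HasDerivAt (fun y : ℝ => Complex.exp (y : ℂ)) (Complex.exp (x : ℂ)) x :=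
    (Complex.hasDerivAt_exp (x : ℂ)).comp_ofReal
  have hneg : HasDerivAt (fun y : ℝ => g (-y)) ((-1 : ℝ) • deriv g (-x)) x :=
    ((hg (-x)).hasDerivAt).scomp x (hasDerivAt_neg x)
  have hH' : HasDerivAt (fun y : ℝ => Complex.exp (y : ℂ) * g (-y))
      (Complex.exp (x : ℂ) * g (-x) + Complex.exp (x : ℂ) * ((-1 : ℝ) • deriv g (-x))) x :=
    hexp.mul hneg
  have hd : deriv (fun y : ℝ => Complex.exp (y : ℂ) * g (-y)) x
      = Complex.exp (x : ℂ) * g (-x) - Complex.exp (x : ℂ) * deriv g (-x) := by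
    rw [hH'.deriv]; simp; ring
  -- nonvanishing facts
  have hE : Complex.exp (x : ℂ) ≠ 0 := Complex.exp_ne_zero _
  have hr1 : Real.exp (-2 * x) ≠ 1 := by
    intro h; rw [Real.exp_eq_one_iff] at h; apply hx; linarith
  have hr2 : Real.exp (2 * x) ≠ 1 := by
    intro h; rw [Real.exp_eq_one_iff] at h; apply hx; linarith
  have hd1 : (1 : ℂ) - Complex.exp (-2 * (x : ℂ)) ≠ 0 := by
    intro h
    apply hr1
    have : Complex.exp (-2 * (x : ℂ)) = ((Real.exp (-2 * x) : ℝ) : ℂ) := by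
      rw [Complex.ofReal_exp]; push_cast; ring_nf
    rw [this] at h
    exact_mod_cast (sub_eq_zero.mp h).symm
  have hd2 : (1 : ℂ) - Complex.exp (-2 * ((-x : ℝ) : ℂ)) ≠ 0 := by
    intro h
    apply hr2
    have : Complex.exp (-2 * ((-x : ℝ) : ℂ)) = ((Real.exp (2 * x) : ℝ) : ℂ) := by
      rw [Complex.ofReal_exp]; push_cast; ring_nf
    rw [this] at h
    exact_mod_cast (sub_eq_zero.mp h).symm
  -- rewrite exponentials in terms of E := exp x
  have e1 : Complex.exp (-2 * (x : ℂ)) = (Complex.exp (x : ℂ))⁻¹ * (Complex.exp (x : ℂ))⁻¹ := by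
    rw [← Complex.exp_neg, ← Complex.exp_add]; ring_nf
  have e2 : Complex.exp (-2 * ((-x : ℝ) : ℂ)) = Complex.exp (x : ℂ) * Complex.exp (x : ℂ) := by
    rw [← Complex.exp_add]; push_cast; ring_nf
  have e3 : Complex.exp (((-x : ℝ) : ℂ)) = (Complex.exp (x : ℂ))⁻¹ := by
    rw [← Complex.exp_neg]; push_cast; ring_nf
  simp only [cherednik, hd, neg_neg, e3] at *
  rw [e1] at hd1 ⊢
  rw [e2] at hd2 ⊢
  have hprod : Complex.exp (x : ℂ) * Complex.exp (x : ℂ) - 1 ≠ 0 := fun h => hd2 (by linear_combination -h)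
  have key : 1 - (Complex.exp (x : ℂ))⁻¹ * (Complex.exp (x : ℂ))⁻¹
      = (Complex.exp (x : ℂ) * Complex.exp (x : ℂ) - 1) / (Complex.exp (x : ℂ) * Complex.exp (x : ℂ)) := by
    field_simp
  rw [key]
  field_simp
  have h1 : Complex.exp (x : ℂ) ^ 2 - 1 ≠ 0 := by rw [sq]; exact hprod
  have h2 : 1 - Complex.exp (x : ℂ) ^ 2 ≠ 0 := by rw [sq]; exact hd2
  field_simp
  ring
end

section
/- Let k be a real number, λ ∈ ℂ, and g : ℝ → ℂ a differentiable function satisfying (T^k g)(x) = λ·g(x) for all x ≠ 0. Then the tilted reflection H(x) := e^{x}·g(−x) satisfies (T^k H)(x) = (1 − λ)·H(x) for all x ≠ 0. -/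
open Complex

theorem cherednik_reflection_eigenfunction (k : ℝ) (lam : ℂ) (g : ℝ → ℂ)
    (hg : Differentiable ℝ g)
    (heig : ∀ x : ℝ, x ≠ 0 → cherednik k g x = lam * g x)
    (H : ℝ → ℂ) (hH : ∀ x : ℝ, H x = Complex.exp (x : ℂ) * g (-x)) :
    ∀ x : ℝ, x ≠ 0 → cherednik k H x = (1 - lam) * H x := by
  intro x hx
  have hx' : (-x : ℝ) ≠ 0 := neg_ne_zero.mpr hx
  -- denominators nonzero
  have hexp : ∀ t : ℝ, t ≠ 0 → (1 : ℂ) - Complex.exp (-2 * (t : ℂ)) ≠ 0 := by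
    intro t ht
    rw [show (-2 * (t : ℂ)) = ((-2 * t : ℝ) : ℂ) by push_cast; ring, ← Complex.ofReal_exp,
      sub_ne_zero]
    intro h
    have h1 : Real.exp (-2 * t) = 1 := by exact_mod_cast h.symm
    rw [Real.exp_eq_one_iff] at h1
    exact ht (by linarith)
  have hd1 : (1 : ℂ) - Complex.exp (-2 * (x : ℂ)) ≠ 0 := hexp x hx
  have hd2 : (1 : ℂ) - Complex.exp (-2 * ((-x : ℝ) : ℂ)) ≠ 0 := hexp (-x) hx'
  -- derivative of H
  have hH' : HasDerivAt H (Complex.exp (x : ℂ) * g (-x) - Complex.exp (x : ℂ) * deriv g (-x)) x := by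
    have hfun : H = fun y : ℝ => Complex.exp (y : ℂ) * g (-y) := funext hH
    rw [hfun]
    have h1 : HasDerivAt (fun y : ℝ => Complex.exp (y : ℂ)) (Complex.exp (x : ℂ)) x := by
      simpa using (Complex.hasDerivAt_exp (x : ℂ)).comp_ofReal
    have h2 : HasDerivAt (fun y : ℝ => g (-y)) (-(deriv g (-x))) x := by
      have := ((hg (-x)).hasDerivAt).scomp x (hasDerivAt_neg x)
      simpa [Function.comp_def] using this
    simpa [mul_neg, sub_eq_add_neg, Pi.mul_def] using h1.mul h2
  have heq := heig (-x) hx'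
  unfold cherednik at heq ⊢
  rw [hH'.deriv]
  rw [hH x, hH (-x)] at *
  simp only [neg_neg] at *
  -- express exponentials in terms of u := exp x
  have e1 : Complex.exp (-2 * (x : ℂ)) = (Complex.exp (x : ℂ))⁻¹ * (Complex.exp (x : ℂ))⁻¹ := by
    rw [← Complex.exp_neg, ← Complex.exp_add]; ring_nf
  have e2 : Complex.exp (-2 * ((-x : ℝ) : ℂ)) = Complex.exp (x : ℂ) * Complex.exp (x : ℂ) := by
    rw [← Complex.exp_add]; push_cast; ring_nf
  have e3 : Complex.exp (((-x : ℝ)) : ℂ) = (Complex.exp (x : ℂ))⁻¹ := by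
    rw [← Complex.exp_neg]; push_cast; ring_nf
  rw [e2] at heq
  rw [e1, e3]
  have hu : Complex.exp (x : ℂ) ≠ 0 := Complex.exp_ne_zero _
  have hd2' : (1 : ℂ) - Complex.exp (x : ℂ) * Complex.exp (x : ℂ) ≠ 0 := e2 ▸ hd2
  have hd3 : Complex.exp (x : ℂ) * Complex.exp (x : ℂ) - 1 ≠ 0 := fun h => hd2' (by linear_combination -h)
  have hD : deriv g (-x) = lam * g (-x) + (k : ℂ) * g (-x)
      - 2 * (k : ℂ) * (g (-x) - g x) / (1 - Complex.exp (x : ℂ) * Complex.exp (x : ℂ)) := by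
    linear_combination heq
  rw [hD]
  field_simp
  have h2a : (1 : ℂ) - Complex.exp (x : ℂ) ^ 2 ≠ 0 := by rwa [sq]
  have h2b : Complex.exp (x : ℂ) ^ 2 - 1 ≠ 0 := by rwa [sq]
  field_simp
  ring
end

section
/- Let k be a real number and g : ℝ → ℂ a differentiable function. Then for every x ≠ 0, the reflected function g∘neg (i.e. x ↦ g(−x)) satisfies (T^k (g∘neg))(x) = −(T^k g)(−x) − 2k·g(x). -/
open Complex

theorem cherednik_reflected (k : ℝ) (g : ℝ → ℂ) (hg : Differentiable ℝ g) :
    ∀ x : ℝ, x ≠ 0 →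
      cherednik k (fun t => g (-t)) x = -(cherednik k g (-x)) - 2 * (k : ℂ) * g x := by
  intro x hx
  have hexp : ∀ y : ℝ, y ≠ 0 → (1 : ℂ) - Complex.exp (-2 * (y : ℂ)) ≠ 0 := by
    intro y hy h
    have : Complex.exp (-2 * (y : ℂ)) = 1 := by linear_combination -h
    rw [Complex.exp_eq_one_iff] at this
    obtain ⟨n, hn⟩ := this
    have him := congrArg Complex.im hn
    simp [Complex.ext_iff] at hn
    have hre := hn.1
    exact hy hre
  have ha := hexp x hx
  have hb := hexp (-x) (neg_ne_zero.mpr hx)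
  simp only [cherednik, deriv_comp_neg]
  push_cast at hb ⊢
  set a := Complex.exp (-2 * (x : ℂ)) with ha'
  have hb' : Complex.exp (-2 * (-(x : ℂ))) = Complex.exp (2 * (x : ℂ)) := by ring_nf
  rw [hb'] at hb ⊢
  set b := Complex.exp (2 * (x : ℂ)) with hb''
  have hab : a * b = 1 := by
    rw [ha', hb'', ← Complex.exp_add]
    ring_nf
    exact Complex.exp_zero
  field_simp
  linear_combination (2 * (k:ℂ) * (g x - g (-x))) * hab
end

section
/- Let k be a real number, n ≥ 1 an integer with n + k ≠ 0, and g : ℝ → ℂ a differentiable function with (T^k g)(x) = (n+k)·g(x) for all x ≠ 0, and suppose g is not identically zero on ℝ \ {0}. Let B ∈ ℂ and set F(x) := g(−x) + B·g(x). If (T^k F)(x) = −(n+k)·F(x) for all x ≠ 0, then B = k/(n+k). -/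
open Complex

theorem negative_index_coefficient (k : ℝ) (n : ℤ) (hn : 1 ≤ n)
    (hnk : (n : ℝ) + k ≠ 0) (g : ℝ → ℂ) (hg : Differentiable ℝ g)
    (heig : ∀ x : ℝ, x ≠ 0 → cherednik k g x = ((n : ℂ) + (k : ℂ)) * g x)
    (hne : ∃ x : ℝ, x ≠ 0 ∧ g x ≠ 0)
    (B : ℂ) (F : ℝ → ℂ) (hF : ∀ x : ℝ, F x = g (-x) + B * g x)
    (heigF : ∀ x : ℝ, x ≠ 0 → cherednik k F x = -((n : ℂ) + (k : ℂ)) * F x) :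
    B = (k : ℂ) / ((n : ℂ) + (k : ℂ)) := by
  obtain ⟨x0, hx0, hgx0⟩ := hne
  have hlam : ((n : ℂ) + (k : ℂ)) ≠ 0 := by
    have := Complex.ofReal_ne_zero.mpr hnk
    push_cast at this
    exact this
  -- nonvanishing denominators
  have hexp : ∀ y : ℝ, y ≠ 0 → (1 : ℂ) - Complex.exp (-2 * (y : ℂ)) ≠ 0 := by
    intro y hy h
    rw [sub_eq_zero] at h
    have hc : ((-2 : ℂ) * y) = (((-2 * y : ℝ)) : ℂ) := by push_cast; ring
    rw [hc, ← Complex.ofReal_exp] at h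
    have h2 : Real.exp (-2 * y) = 1 := by exact_mod_cast h.symm
    rw [Real.exp_eq_one_iff] at h2
    apply hy; linarith
  have he1 := hexp x0 hx0
  have he2 := hexp (-x0) (neg_ne_zero.mpr hx0)
  have hE : Complex.exp (-2 * (x0 : ℂ)) * Complex.exp (-2 * ((-x0 : ℝ) : ℂ)) = 1 := by
    rw [← Complex.exp_add, ← Complex.exp_zero]
    congr 1
    push_cast
    ring
  have hsum : 1 / (1 - Complex.exp (-2 * (x0 : ℂ)))
      + 1 / (1 - Complex.exp (-2 * ((-x0 : ℝ) : ℂ))) = 1 := by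
    rw [div_add_div _ _ he1 he2, div_eq_one_iff_eq (mul_ne_zero he1 he2)]
    linear_combination -hE
  -- derivative of F at x0
  have hdF : deriv F x0 = -deriv g (-x0) + B * deriv g x0 := by
    have h1 : HasDerivAt (fun x : ℝ => g (-x)) ((-1 : ℝ) • deriv g (-x0)) x0 :=
      HasDerivAt.scomp x0 (hg (-x0)).hasDerivAt (hasDerivAt_neg x0)
    have h2 : HasDerivAt (fun x : ℝ => g (-x) + B * g x)
        ((-1 : ℝ) • deriv g (-x0) + B * deriv g x0) x0 :=
      h1.add ((hg x0).hasDerivAt.const_mul B)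
    have hFun : F = fun x : ℝ => g (-x) + B * g x := funext hF
    rw [hFun]
    rw [h2.deriv]
    simp
  have hA := heig x0 hx0
  have hB' := heig (-x0) (neg_ne_zero.mpr hx0)
  have hC := heigF x0 hx0
  simp only [cherednik] at hA hB' hC
  rw [hdF, hF x0, hF (-x0)] at hC
  rw [neg_neg] at hB' hC
  have key : 2 * (B * ((n : ℂ) + (k : ℂ)) - (k : ℂ)) * g x0 = 0 := by
    linear_combination hC + hB' - B * hA + 2 * (k : ℂ) * (g x0 - g (-x0)) * hsum
  rw [eq_div_iff hlam]
  have := mul_eq_zero.mp key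
  rcases this with h | h
  · have : B * ((n : ℂ) + (k : ℂ)) - (k : ℂ) = 0 := by
      rcases mul_eq_zero.mp h with h2 | h2
      · norm_num at h2
      · exact h2
    exact sub_eq_zero.mp this
  · exact absurd h hgx0
end
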